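/- Let s ≤ t be real numbers and let a, b : [s, t] → ℝ be continuous functions satisfying a(v) − a(s) = (b(v) − b(s)) + ∫_s^v exp(−a(u)) du for every v ∈ [s, t]. Then exp(−a(t))·∫_s^t exp(b(t) − b(u)) du < 1, and a(t) − a(s) = (b(t) − b(s)) − log(1 − exp(−a(t))·∫_s^t exp(b(t) − b(u)) du). -/

import Mathlib

open intervalIntegral Real

/-- Backward integration formula for paths related by `da = db + e^{-a} dt`. -/
theorem path_transform_backward
    (s t : ℝ) (hst : s ≤ t) (a b : ℝ → ℝ)
    (ha : ContinuousOn a (Set.Icc s t))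
    (hb : ContinuousOn b (Set.Icc s t))
    (hab : ∀ v ∈ Set.Icc s t,
      a v - a s = (b v - b s) + ∫ u in s..v, Real.exp (-a u)) :
    Real.exp (-a t) * (∫ u in s..t, Real.exp (b t - b u)) < 1 ∧
    a t - a s = (b t - b s)
      - Real.log (1 - Real.exp (-a t) * ∫ u in s..t, Real.exp (b t - b u)) := by
  -- continuous extension of `a`
  set A : ℝ → ℝ := Set.IccExtend hst ((Set.Icc s t).restrict a) with hAdef
  have hAc : Continuous A :=
    (continuousOn_iff_continuous_restrict.mp ha).Icc_extend'
  have hAeq : ∀ x ∈ Set.Icc s t, A x = a x := fun x hx => by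
    simp [hAdef, Set.IccExtend_of_mem hst _ hx]
    rfl
  have cA : Continuous fun u => Real.exp (-A u) := Real.continuous_exp.comp hAc.neg
  set F : ℝ → ℝ := fun v => ∫ u in s..v, Real.exp (-A u) with hFdef
  have hFd : ∀ v : ℝ, HasDerivAt F (Real.exp (-A v)) v := fun v =>
    intervalIntegral.integral_hasDerivAt_right (cA.intervalIntegrable s v)
      (cA.stronglyMeasurableAtFilter MeasureTheory.volume (nhds v)) cA.continuousAt
  have hFc : Continuous F :=
    continuous_iff_continuousAt.mpr fun v => (hFd v).continuousAt
  have key : (∫ u in s..t, Real.exp (F u) * Real.exp (-A u))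
      = Real.exp (F t) - Real.exp (F s) :=
    intervalIntegral.integral_eq_sub_of_hasDerivAt (fun u _ => (hFd u).exp)
      (((Real.continuous_exp.comp hFc).mul cA).intervalIntegrable s t)
  have hFs : F s = 0 := intervalIntegral.integral_same
  -- F agrees with the integral of exp(-a)
  have hFeq : ∀ u ∈ Set.Icc s t, F u = ∫ x in s..u, Real.exp (-a x) := by
    intro u hu
    refine intervalIntegral.integral_congr fun x hx => ?_
    rw [Set.uIcc_of_le hu.1] at hx
    exact congrArg Real.exp (congrArg Neg.neg (hAeq x ⟨hx.1, hx.2.trans hu.2⟩))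
  have hat : a t - a s = b t - b s + F t := by
    have := hab t ⟨hst, le_refl t⟩
    rw [← hFeq t ⟨hst, le_refl t⟩] at this
    linarith
  -- rewrite integrand on [s,t]
  have key2 : (∫ u in s..t, Real.exp (F u) * Real.exp (-A u))
      = Real.exp (b s - a s) * ∫ u in s..t, Real.exp (-b u) := by
    rw [← intervalIntegral.integral_const_mul]
    refine intervalIntegral.integral_congr fun u hu => ?_
    rw [Set.uIcc_of_le hst] at hu
    have h1 := hab u hu
    rw [← hFeq u hu] at h1
    rw [hAeq u hu, ← Real.exp_add, ← Real.exp_add]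
    congr 1
    linarith
  set J : ℝ := ∫ u in s..t, Real.exp (-b u) with hJ
  have h1 : Real.exp (b s - a s) * J = Real.exp (F t) - 1 := by
    rw [← key2, key, hFs, Real.exp_zero]
  have hI : (∫ u in s..t, Real.exp (b t - b u)) = Real.exp (b t) * J := by
    rw [hJ, ← intervalIntegral.integral_const_mul]
    refine intervalIntegral.integral_congr fun u hu => ?_
    rw [← Real.exp_add]
    ring_nf
  have hE : Real.exp (-a t) * (∫ u in s..t, Real.exp (b t - b u))
      = 1 - Real.exp (-F t) := by
    rw [hI]
    have h2 : Real.exp (-a t) * Real.exp (b t)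
        = Real.exp (b s - a s) * Real.exp (-F t) := by
      rw [← Real.exp_add, ← Real.exp_add]
      congr 1
      linarith
    calc Real.exp (-a t) * (Real.exp (b t) * J)
        = Real.exp (-F t) * (Real.exp (b s - a s) * J) := by
          rw [← mul_assoc, h2]; ring
      _ = Real.exp (-F t) * (Real.exp (F t) - 1) := by rw [h1]
      _ = 1 - Real.exp (-F t) := by
          rw [mul_sub, ← Real.exp_add, neg_add_cancel, Real.exp_zero]; ring
  constructor
  · rw [hE]
    have := Real.exp_pos (-F t)
    linarith
  · rw [hE, sub_sub_cancel, Real.log_exp]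
    linarith
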